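/- For every integer n ≥ 1, the sequence R_n := (∑_{k=1}^n 1/k) - log(n + 1/2) satisfies 1/(24(n+1)^2) < R_n - γ < 1/(24 n^2), where γ is the Euler–Mascheroni constant. -/

import Mathlib

open Real Finset Filter Topology

lemma log_bounds {x : ℝ} (hx : 0 < x) (hx4 : x ≤ 1/4) :
    2*x + 2/3*x^3 < Real.log (1+x) - Real.log (1-x) ∧
    Real.log (1+x) - Real.log (1-x) < 2*x + 2/3*x^3 + 2/5*x^5 + x^7 := by
  have hx1 : |x| < 1 := by rw [abs_of_pos hx]; linarith
  have hx1' : |(-x)| < 1 := by rwa [abs_neg]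
  have h1 := Real.abs_log_sub_add_sum_range_le hx1 7
  have h2 := Real.abs_log_sub_add_sum_range_le hx1' 7
  rw [abs_le] at h1 h2
  simp only [Finset.sum_range_succ, Finset.sum_range_zero] at h1 h2
  rw [abs_of_pos hx] at h1
  rw [abs_neg, abs_of_pos hx] at h2
  norm_num at h1 h2
  have hd : (0:ℝ) < 1 - x := by linarith
  have hb : x^8/(1-x) ≤ 4/3*x^8 := by
    rw [div_le_iff₀ hd]; nlinarith [pow_pos hx 8]
  obtain ⟨h1l, h1r⟩ := h1
  obtain ⟨h2l, h2r⟩ := h2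
  constructor
  · nlinarith [pow_pos hx 5, pow_pos hx 7, pow_pos hx 8,
      mul_le_mul_of_nonneg_left hx4 (le_of_lt (pow_pos hx 7))]
  · nlinarith [pow_pos hx 7, pow_pos hx 8,
      mul_le_mul_of_nonneg_left hx4 (le_of_lt (pow_pos hx 7))]

lemma arith_lower {c : ℝ} (hc : 1 ≤ c) :
    1/(24*(c+1)^2) - 1/(24*(c+2)^2) < 2/3*(1/(2*(c+1)))^3 := by
  have h1 : (0:ℝ) < c+1 := by linarith
  have h2 : (0:ℝ) < c+2 := by linarith
  have key : 2/3*(1/(2*(c+1)))^3 = 1/(12*(c+1)^3) := by field_simp; ring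
  rw [key, div_sub_div _ _ (by positivity) (by positivity),
    div_lt_div_iff₀ (by positivity) (by positivity)]
  nlinarith [pow_pos h1 3, pow_pos h2 2, mul_pos (pow_pos h1 3) (pow_pos h2 2),
    mul_pos (mul_pos (pow_pos h1 3) (pow_pos h2 2)) h1]

lemma arith_upper {c : ℝ} (hc : 1 ≤ c) :
    2/3*(1/(2*(c+1)))^3 + 2/5*(1/(2*(c+1)))^5 + (1/(2*(c+1)))^7 <
      1/(24*c^2) - 1/(24*(c+1)^2) := by
  have h1 : (0:ℝ) < c+1 := by linarith
  have h0 : (0:ℝ) < c := by linarith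
  rw [div_sub_div _ _ (by positivity) (by positivity)]
  have key : 2/3*(1/(2*(c+1)))^3 + 2/5*(1/(2*(c+1)))^5 + (1/(2*(c+1)))^7
      = (160*(c+1)^4 + 24*(c+1)^2 + 15)/(1920*(c+1)^7) := by
    field_simp; ring
  rw [key, div_lt_div_iff₀ (by positivity) (by positivity)]
  nlinarith [pow_pos h1 4, pow_pos h1 5, pow_pos h0 2, pow_pos h1 7,
    mul_pos (pow_pos h1 4) h0, mul_pos (mul_pos (pow_pos h1 4) h0) h0,
    sq_nonneg (c-1), mul_pos (pow_pos h1 5) (pow_pos h0 2)]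

noncomputable def Rseq (n : ℕ) : ℝ :=
  (∑ k ∈ Finset.Icc 1 n, (1 : ℝ) / k) - Real.log ((n : ℝ) + 1 / 2)

lemma Rseq_sub (k : ℕ) :
    Rseq k - Rseq (k+1) =
      (Real.log (1 + 1/(2*((k:ℝ)+1))) - Real.log (1 - 1/(2*((k:ℝ)+1))))
        - 2 * (1/(2*((k:ℝ)+1))) := by
  have hm : (0:ℝ) < (k:ℝ) + 1 := by positivity
  have e1 : ((k:ℝ)+1) + 1/2 = ((k:ℝ)+1) * (1 + 1/(2*((k:ℝ)+1))) := by field_simp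
  have e2 : ((k:ℝ)) + 1/2 = ((k:ℝ)+1) * (1 - 1/(2*((k:ℝ)+1))) := by field_simp; ring
  have hp1 : (0:ℝ) < 1 + 1/(2*((k:ℝ)+1)) := by positivity
  have hp2 : (0:ℝ) < 1 - 1/(2*((k:ℝ)+1)) := by
    rw [sub_pos, div_lt_one (by positivity)]; linarith
  unfold Rseq
  rw [Finset.sum_Icc_succ_top (by omega)]
  push_cast
  rw [e1, e2, Real.log_mul (ne_of_gt hm) (ne_of_gt hp1),
    Real.log_mul (ne_of_gt hm) (ne_of_gt hp2)]
  field_simp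
  ring

lemma Rseq_tendsto :
    Tendsto Rseq atTop (𝓝 Real.eulerMascheroniConstant) := by
  have h1 := Real.tendsto_harmonic_sub_log
  have h2 : Tendsto (fun n : ℕ => Real.log (1 + (1/2) / n)) atTop (𝓝 0) := by
    have hc : Tendsto (fun n : ℕ => 1 + (1/2 : ℝ) / n) atTop (𝓝 1) := by
      simpa using (tendsto_const_div_atTop_nhds_zero_nat (1/2 : ℝ)).const_add 1
    have := (Real.continuousAt_log (by norm_num : (1:ℝ) ≠ 0)).tendsto.comp hc
    simpa [Function.comp_def] using this
  have h3 := h1.sub h2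
  rw [sub_zero] at h3
  apply h3.congr'
  filter_upwards [eventually_ge_atTop 1] with n hn
  have hn0 : (0:ℝ) < (n:ℝ) := by exact_mod_cast Nat.pos_of_ne_zero (by omega)
  have e : ((n:ℝ) + 1/2) = (n:ℝ) * (1 + (1/2)/(n:ℝ)) := by field_simp
  unfold Rseq
  rw [e, Real.log_mul (ne_of_gt hn0) (by positivity)]
  have hh : (harmonic n : ℝ) = ∑ k ∈ Finset.Icc 1 n, (1:ℝ)/k := by
    rw [harmonic_eq_sum_Icc]
    push_cast
    simp [one_div]
  rw [hh]
  ring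

lemma Rseq_sub_bounds (k : ℕ) (hk : 1 ≤ k) :
    1/(24*((k:ℝ)+1)^2) - 1/(24*((k:ℝ)+2)^2) < Rseq k - Rseq (k+1) ∧
    Rseq k - Rseq (k+1) < 1/(24*(k:ℝ)^2) - 1/(24*((k:ℝ)+1)^2) := by
  have hk1 : (1:ℝ) ≤ (k:ℝ) := by exact_mod_cast hk
  set x : ℝ := 1/(2*((k:ℝ)+1)) with hxdef
  have hx : 0 < x := by positivity
  have hx4 : x ≤ 1/4 := by
    rw [hxdef, div_le_div_iff₀ (by positivity) (by norm_num)]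
    linarith
  obtain ⟨hl, hr⟩ := log_bounds hx hx4
  rw [Rseq_sub]
  constructor
  · have := arith_lower hk1
    nlinarith [this]
  · have := arith_upper hk1
    nlinarith [pow_pos hx 5, pow_pos hx 7]

theorem detemple_inequality (n : ℕ) (hn : 1 ≤ n) :
    1 / (24 * ((n : ℝ) + 1) ^ 2) <
      (∑ k ∈ Finset.Icc 1 n, (1 : ℝ) / k) - Real.log ((n : ℝ) + 1 / 2) -
        Real.eulerMascheroniConstant ∧
    (∑ k ∈ Finset.Icc 1 n, (1 : ℝ) / k) - Real.log ((n : ℝ) + 1 / 2) -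
        Real.eulerMascheroniConstant < 1 / (24 * (n : ℝ) ^ 2) := by
  set γ := Real.eulerMascheroniConstant
  set A : ℕ → ℝ := fun k => Rseq k - 1/(24*((k:ℝ)+1)^2) with hA
  set B : ℕ → ℝ := fun k => Rseq k - 1/(24*(k:ℝ)^2) with hB
  have hAstep : ∀ k, 1 ≤ k → A (k+1) < A k := by
    intro k hk
    have h := (Rseq_sub_bounds k hk).1
    simp only [hA]
    push_cast
    have e : ((k:ℝ)+1+1) = ((k:ℝ)+2) := by ring
    rw [e]
    linarith
  have hBstep : ∀ k, 1 ≤ k → B k < B (k+1) := by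
    intro k hk
    have h := (Rseq_sub_bounds k hk).2
    simp only [hB]
    push_cast
    linarith
  have hg0 : Tendsto (fun k : ℕ => 1/(24*((k:ℝ)+1)^2)) atTop (𝓝 0) := by
    have ht : Tendsto (fun k : ℕ => 24*((k:ℝ)+1)^2) atTop atTop := by
      apply tendsto_atTop_mono (fun k => ?_) tendsto_natCast_atTop_atTop
      have h2 : (k:ℝ) ≤ ((k:ℝ)+1)^2 := by nlinarith [sq_nonneg (k:ℝ), Nat.cast_nonneg (α := ℝ) k]
      nlinarith [sq_nonneg ((k:ℝ)+1)]
    exact ht.inv_tendsto_atTop.congr (fun k => (one_div _).symm)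
  have hh0 : Tendsto (fun k : ℕ => 1/(24*(k:ℝ)^2)) atTop (𝓝 0) := by
    have ht : Tendsto (fun k : ℕ => 24*(k:ℝ)^2) atTop atTop := by
      apply tendsto_atTop_mono (fun k => ?_) tendsto_natCast_atTop_atTop
      have h2 : (k:ℝ) ≤ (k:ℝ)^2 := by exact_mod_cast Nat.le_self_pow (by norm_num) k
      nlinarith [sq_nonneg (k:ℝ)]
    exact ht.inv_tendsto_atTop.congr (fun k => (one_div _).symm)
  have hAten : Tendsto A atTop (𝓝 γ) := by
    have := Rseq_tendsto.sub hg0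
    rw [sub_zero] at this
    exact this
  have hBten : Tendsto B atTop (𝓝 γ) := by
    have := Rseq_tendsto.sub hh0
    rw [sub_zero] at this
    exact this
  have hAanti : ∀ m, n+1 ≤ m → A m ≤ A (n+1) := by
    intro m hm
    induction m, hm using Nat.le_induction with
    | base => exact le_refl _
    | succ m hm ih => exact le_trans (le_of_lt (hAstep m (by omega))) ih
  have hBmono : ∀ m, n+1 ≤ m → B (n+1) ≤ B m := by
    intro m hm
    induction m, hm using Nat.le_induction with
    | base => exact le_refl _
    | succ m hm ih => exact le_trans ih (le_of_lt (hBstep m (by omega)))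
  have h1 : γ ≤ A (n+1) := le_of_tendsto hAten (eventually_atTop.mpr ⟨n+1, hAanti⟩)
  have h2 : B (n+1) ≤ γ := ge_of_tendsto hBten (eventually_atTop.mpr ⟨n+1, hBmono⟩)
  have hA' : γ < A n := lt_of_le_of_lt h1 (hAstep n hn)
  have hB' : B n < γ := lt_of_lt_of_le (hBstep n hn) h2
  simp only [hA, hB, Rseq] at hA' hB'
  constructor <;> linarith
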